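/- With the setup of a stationary hidden quantum Markov process (instrument {C_ω}, Λ = ∑_ω C_ω trace-preserving, fixed state ρ, C_X := ∑_ω X(ω)C_ω), the variance of S_n := ∑_{i=1}^n X_i satisfies Var(S_n) = n·Var_ρ[X] + 2∑_{k=0}^{n-2}(n-k-1)·Tr C_X∘(Λᵏ - Λ̃)∘C_X(ρ), where Λ̃(H) := (Tr H)ρ and Var_ρ[X] := ∑_ω X(ω)² Tr C_ω(ρ) - (∑_ω X(ω) Tr C_ω(ρ))². -/

import Mathlib

open scoped ComplexOrder

abbrev HMat (d : ℕ) := Matrix (Fin d) (Fin d) ℂ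

section AuxHQM

variable {d : ℕ} {Ω : Type*} [Fintype Ω] [DecidableEq Ω]


variable (C : Ω → (HMat d →ₗ[ℂ] HMat d))

/-- fold of the instrument maps along a word, as a linear map -/
def hqmFL (l : List Ω) : HMat d →ₗ[ℂ] HMat d :=
  l.foldl (fun acc ω => C ω ∘ₗ acc) LinearMap.id

lemma hqmFL_aux (l : List Ω) (a : HMat d →ₗ[ℂ] HMat d) (σ : HMat d) :
    (l.foldl (fun acc ω => C ω ∘ₗ acc) a) σ = l.foldl (fun τ ω => C ω τ) (a σ) := by
  induction l generalizing a with
  | nil => rfl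
  | cons ω l ih => simpa using ih (C ω ∘ₗ a)

lemma hqmFL_apply (l : List Ω) (σ : HMat d) :
    hqmFL C l σ = l.foldl (fun τ ω => C ω τ) σ := hqmFL_aux C l LinearMap.id σ

lemma hqmFL_cons (ω : Ω) (l : List Ω) (σ : HMat d) :
    hqmFL C (ω :: l) σ = hqmFL C l (C ω σ) := by
  simp [hqmFL_apply]

lemma hqmFL_snoc (ω : Ω) (l : List Ω) (σ : HMat d) :
    hqmFL C (l ++ [ω]) σ = C ω (hqmFL C l σ) := by
  simp [hqmFL_apply, List.foldl_append]

lemma hqm_sum_split_cons {n : ℕ} {β : Type*} [AddCommMonoid β] (G : (Fin (n+1) → Ω) → β) :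
    ∑ x : Fin (n+1) → Ω, G x = ∑ ω : Ω, ∑ y : Fin n → Ω, G (Fin.cons ω y) := by
  rw [← Equiv.sum_comp (Fin.consEquiv fun _ => Ω) G, Fintype.sum_prod_type]
  rfl

lemma hqm_sum_split_snoc {n : ℕ} {β : Type*} [AddCommMonoid β] (G : (Fin (n+1) → Ω) → β) :
    ∑ x : Fin (n+1) → Ω, G x = ∑ ω : Ω, ∑ y : Fin n → Ω, G (Fin.snoc y ω) := by
  rw [← Equiv.sum_comp (Fin.snocEquiv fun _ => Ω) G, Fintype.sum_prod_type]
  rfl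

lemma hqm_ofFn_cons {n : ℕ} (ω : Ω) (y : Fin n → Ω) :
    List.ofFn (Fin.cons ω y : Fin (n+1) → Ω) = ω :: List.ofFn y := by
  simp [List.ofFn_succ]

lemma hqm_ofFn_snoc {n : ℕ} (ω : Ω) (y : Fin n → Ω) :
    List.ofFn (Fin.snoc y ω : Fin (n+1) → Ω) = List.ofFn y ++ [ω] := by
  rw [List.ofFn_succ']
  simp [List.concat_eq_append]

end AuxHQM

section Core

variable {d : ℕ} {Ω : Type*} [Fintype Ω] [DecidableEq Ω]
variable (C : Ω → (HMat d →ₗ[ℂ] HMat d))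

lemma hqm_sumPath (n : ℕ) (σ : HMat d) :
    ∑ x : Fin n → Ω, hqmFL C (List.ofFn x) σ = ((∑ ω, C ω) ^ n) σ := by
  induction n generalizing σ with
  | zero =>
    simp [hqmFL, List.ofFn_zero]
  | succ n ih =>
    rw [hqm_sum_split_cons]
    simp only [hqm_ofFn_cons, hqmFL_cons, ih]
    rw [pow_succ, Module.End.mul_apply, ← map_sum, LinearMap.sum_apply]

lemma hqm_pow_fix {ρ : HMat d} (hfix : (∑ ω, C ω) ρ = ρ) (k : ℕ) :
    ((∑ ω, C ω) ^ k) ρ = ρ := by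
  induction k with
  | zero => simp
  | succ k ih => rw [pow_succ, Module.End.mul_apply, hfix, ih]

lemma hqm_pow_trace (hTP : ∀ H : HMat d, ((∑ ω, C ω) H).trace = H.trace) (k : ℕ) (σ : HMat d) :
    (((∑ ω, C ω) ^ k) σ).trace = σ.trace := by
  induction k generalizing σ with
  | zero => simp
  | succ k ih => rw [pow_succ', Module.End.mul_apply, hTP, ih]

lemma hqm_P1mat (Y : Ω → ℂ) :
    ∀ (n : ℕ) (i : Fin n) (σ : HMat d),
      ∑ x : Fin n → Ω, Y (x i) • hqmFL C (List.ofFn x) σ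
        = ((∑ ω, C ω) ^ (n - 1 - (i : ℕ)))
            ((∑ ω, Y ω • C ω) (((∑ ω, C ω) ^ (i : ℕ)) σ)) := by
  intro n
  induction n with
  | zero => exact fun i => i.elim0
  | succ n ih =>
    intro i σ
    induction i using Fin.cases with
    | zero =>
      rw [hqm_sum_split_cons]
      simp only [Fin.cons_zero, hqm_ofFn_cons, hqmFL_cons]
      have : ∀ ω : Ω, ∑ y : Fin n → Ω, Y ω • hqmFL C (List.ofFn y) (C ω σ)
          = Y ω • ((∑ ω', C ω') ^ n) (C ω σ) := by
        intro ω; rw [← Finset.smul_sum, hqm_sumPath]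
      simp only [this]
      simp [map_sum, map_smul, LinearMap.sum_apply, Fin.val_zero, pow_zero]
    | succ i =>
      rw [hqm_sum_split_cons]
      simp only [Fin.cons_succ, hqm_ofFn_cons, hqmFL_cons]
      have : ∀ ω : Ω, ∑ y : Fin n → Ω, Y (y i) • hqmFL C (List.ofFn y) (C ω σ)
          = ((∑ ω', C ω') ^ (n - 1 - (i : ℕ)))
              ((∑ ω', Y ω' • C ω') (((∑ ω', C ω') ^ (i : ℕ)) (C ω σ))) := fun ω => ih i (C ω σ)
      simp only [this]
      rw [← map_sum, ← map_sum, ← map_sum]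
      have hexp : n + 1 - 1 - ((i.succ : Fin (n + 1)) : ℕ) = n - 1 - (i : ℕ) := by
        simp only [Fin.val_succ]
        omega
      rw [hexp, Fin.val_succ, pow_succ, Module.End.mul_apply]
      congr 2
      rw [← LinearMap.sum_apply]

end Core

section Traces

variable {d : ℕ} {Ω : Type*} [Fintype Ω] [DecidableEq Ω]
variable (C : Ω → (HMat d →ₗ[ℂ] HMat d))

/-- trace of a weighted sum of applied maps -/
lemma hqm_trD (Z : Ω → ℂ) (τ : HMat d) :
    ∑ ω, Z ω * ((C ω) τ).trace = ((∑ ω, Z ω • C ω) τ).trace := by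
  rw [LinearMap.sum_apply]
  rw [Matrix.trace_sum]
  simp [Matrix.trace_smul, smul_eq_mul]

variable {ρ : HMat d}
variable (hTP : ∀ H : HMat d, ((∑ ω, C ω) H).trace = H.trace)
variable (hfix : (∑ ω, C ω) ρ = ρ)

include hTP hfix in
lemma hqm_P1t (Y : Ω → ℂ) (n : ℕ) (i : Fin n) :
    ∑ x : Fin n → Ω, Y (x i) * (hqmFL C (List.ofFn x) ρ).trace
      = ((∑ ω, Y ω • C ω) ρ).trace := by
  have h := congrArg Matrix.trace (hqm_P1mat C Y n i ρ)
  rw [hqm_pow_fix C hfix, hqm_pow_trace C hTP] at h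
  rw [← h, Matrix.trace_sum]
  simp [Matrix.trace_smul, smul_eq_mul]

include hTP hfix in
lemma hqm_P2t (Y Z : Ω → ℂ) :
    ∀ (n : ℕ) (i j : Fin n), i < j →
      ∑ x : Fin n → Ω, Y (x i) * Z (x j) * (hqmFL C (List.ofFn x) ρ).trace
        = ((∑ ω, Z ω • C ω)
            (((∑ ω, C ω) ^ ((j : ℕ) - (i : ℕ) - 1)) ((∑ ω, Y ω • C ω) ρ))).trace := by
  intro n
  induction n with
  | zero => exact fun i => i.elim0
  | succ n ih =>
    intro i j hij
    rcases eq_or_ne j (Fin.last n) with hj | hj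
    · subst hj
      have hi : i ≠ Fin.last n := hij.ne
      obtain ⟨i', rfl⟩ := Fin.exists_castSucc_eq.mpr hi
      rw [hqm_sum_split_snoc]
      simp only [Fin.snoc_castSucc, Fin.snoc_last, hqm_ofFn_snoc, hqmFL_snoc]
      have key : ∀ ω : Ω, ∑ y : Fin n → Ω,
            Y (y i') * Z ω * ((C ω) (hqmFL C (List.ofFn y) ρ)).trace
          = Z ω * ((C ω) (((∑ ω', C ω') ^ (n - 1 - (i' : ℕ)))
              ((∑ ω', Y ω' • C ω') ρ))).trace := by
        intro ω
        have h2 : ∑ y : Fin n → Ω, Y (y i') * ((C ω) (hqmFL C (List.ofFn y) ρ)).trace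
            = ((C ω) (((∑ ω', C ω') ^ (n - 1 - (i' : ℕ)))
                ((∑ ω', Y ω' • C ω') ρ))).trace := by
          have h3 := congrArg (fun τ => ((C ω) τ).trace) (hqm_P1mat C Y n i' ρ)
          rw [hqm_pow_fix C hfix] at h3
          rw [← h3, map_sum, Matrix.trace_sum]
          simp [Matrix.trace_smul, smul_eq_mul]
        calc ∑ y : Fin n → Ω, Y (y i') * Z ω * ((C ω) (hqmFL C (List.ofFn y) ρ)).trace
            = Z ω * ∑ y : Fin n → Ω, Y (y i') * ((C ω) (hqmFL C (List.ofFn y) ρ)).trace := by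
              rw [Finset.mul_sum]; congr 1; ext y; ring
          _ = _ := by rw [h2]
      simp only [key]
      rw [hqm_trD]
      have h4 : ((Fin.last n : Fin (n+1)) : ℕ) - ((i'.castSucc : Fin (n+1)) : ℕ) - 1
          = n - 1 - (i' : ℕ) := by
        simp only [Fin.val_last, Fin.coe_castSucc]
        omega
      rw [h4]
    · obtain ⟨j', rfl⟩ := Fin.exists_castSucc_eq.mpr hj
      have hi : i ≠ Fin.last n := (hij.trans (Fin.castSucc_lt_last j')).ne
      obtain ⟨i', rfl⟩ := Fin.exists_castSucc_eq.mpr hi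
      rw [hqm_sum_split_snoc]
      simp only [Fin.snoc_castSucc, hqm_ofFn_snoc, hqmFL_snoc]
      rw [Finset.sum_comm]
      have key : ∀ y : Fin n → Ω, ∑ ω : Ω,
            Y (y i') * Z (y j') * ((C ω) (hqmFL C (List.ofFn y) ρ)).trace
          = Y (y i') * Z (y j') * (hqmFL C (List.ofFn y) ρ).trace := by
        intro y
        rw [← Finset.mul_sum]
        congr 1
        rw [← Matrix.trace_sum, ← LinearMap.sum_apply, hTP]
      simp only [key]
      have hij' : i' < j' := by
        rwa [Fin.castSucc_lt_castSucc_iff] at hij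
      rw [ih i' j' hij']
      rfl

end Traces

section Reality

variable {d : ℕ}

lemma hqm_trace_real {A : HMat d →ₗ[ℂ] HMat d}
    (hA : (Matrix.of fun p q : Fin d × Fin d =>
        (A (Matrix.single p.1 q.1 1)) p.2 q.2).IsHermitian)
    {ρ : HMat d} (hρ : ρ.IsHermitian) : ((A ρ).trace).im = 0 := by
  rw [← Complex.conj_eq_iff_im]
  have key : (A ρ).trace
      = ∑ k, ∑ l, ρ k l * ∑ i, (A (Matrix.single k l 1)) i i := by
    conv_lhs => rw [Matrix.matrix_eq_sum_single ρ]
    rw [map_sum, Matrix.trace_sum]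
    refine Finset.sum_congr rfl fun k _ => ?_
    rw [map_sum, Matrix.trace_sum]
    refine Finset.sum_congr rfl fun l _ => ?_
    have h1 : Matrix.single k l (ρ k l) = ρ k l • Matrix.single k l 1 := by
      rw [Matrix.smul_single, smul_eq_mul, mul_one]
    rw [h1, map_smul, Matrix.trace_smul, smul_eq_mul, Matrix.trace, Finset.mul_sum]
    simp [Matrix.diag, Finset.mul_sum]
  rw [key]
  rw [map_sum]
  have step : ∀ k l : Fin d,
      (starRingEnd ℂ) (ρ k l * ∑ i, (A (Matrix.single k l 1)) i i)
        = ρ l k * ∑ i, (A (Matrix.single l k 1)) i i := by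
    intro k l
    rw [map_mul, map_sum]
    congr 1
    · exact hρ.apply l k
    · refine Finset.sum_congr rfl fun i _ => ?_
      exact hA.apply (l, i) (k, i)
  calc ∑ k, (starRingEnd ℂ) (∑ l, ρ k l * ∑ i, (A (Matrix.single k l 1)) i i)
      = ∑ k, ∑ l, ρ l k * ∑ i, (A (Matrix.single l k 1)) i i := by
        refine Finset.sum_congr rfl fun k _ => ?_
        rw [map_sum]
        exact Finset.sum_congr rfl fun l _ => step k l
    _ = ∑ k, ∑ l, ρ k l * ∑ i, (A (Matrix.single k l 1)) i i := Finset.sum_comm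

end Reality

section Comb

lemma hqm_comb_aux (r : ℕ → ℝ) (n : ℕ) :
    ∑ k ∈ Finset.range n, ((n : ℝ) - k - 1) * r k
      = ∑ k ∈ Finset.range (n - 1), ((n : ℝ) - k - 1) * r k := by
  cases n with
  | zero => simp
  | succ m =>
    rw [Finset.sum_range_succ]
    simp

lemma hqm_comb (a : ℝ) (r : ℕ → ℝ) (n : ℕ) :
    ∑ i ∈ Finset.range n, ∑ j ∈ Finset.range n,
        (if i = j then a else r (max i j - min i j - 1))
      = n * a + 2 * ∑ k ∈ Finset.range (n - 1), ((n : ℝ) - k - 1) * r k := by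
  induction n with
  | zero => simp
  | succ n ih =>
    rw [Finset.sum_range_succ]
    have hrow : ∀ i ∈ Finset.range n, ∑ j ∈ Finset.range (n+1),
        (if i = j then a else r (max i j - min i j - 1))
        = (∑ j ∈ Finset.range n, (if i = j then a else r (max i j - min i j - 1)))
          + r (n - i - 1) := by
      intro i hi
      rw [Finset.sum_range_succ]
      have hin : i < n := Finset.mem_range.mp hi
      rw [if_neg (Nat.ne_of_lt hin), Nat.max_eq_right hin.le, Nat.min_eq_left hin.le]
    rw [Finset.sum_congr rfl hrow, Finset.sum_add_distrib, ih]
    have hlast : ∑ j ∈ Finset.range (n+1),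
        (if n = j then a else r (max n j - min n j - 1))
        = (∑ j ∈ Finset.range n, r (n - j - 1)) + a := by
      rw [Finset.sum_range_succ, if_pos rfl]
      congr 1
      refine Finset.sum_congr rfl fun j hj => ?_
      have hjn : j < n := Finset.mem_range.mp hj
      rw [if_neg (Nat.ne_of_lt hjn).symm, Nat.max_eq_left hjn.le, Nat.min_eq_right hjn.le]
    rw [hlast]
    have hrefl : ∑ j ∈ Finset.range n, r (n - j - 1) = ∑ k ∈ Finset.range n, r k := by
      rw [← Finset.sum_range_reflect]
      refine Finset.sum_congr rfl fun j hj => ?_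
      congr 1
      have := Finset.mem_range.mp hj
      omega
    have hcoef : ∑ k ∈ Finset.range n, (((n : ℝ) + 1) - k - 1) * r k
        = (∑ k ∈ Finset.range (n - 1), ((n : ℝ) - k - 1) * r k)
          + ∑ k ∈ Finset.range n, r k := by
      rw [← hqm_comb_aux]
      rw [← Finset.sum_add_distrib]
      refine Finset.sum_congr rfl fun k _ => ?_
      ring
    rw [hrefl]
    push_cast
    rw [hcoef]
    ring

end Comb
/-- Complete positivity via the Choi matrix criterion. -/
def IsCompletelyPositive {d : ℕ}
    (C : Matrix (Fin d) (Fin d) ℂ →ₗ[ℂ] Matrix (Fin d) (Fin d) ℂ) : Prop :=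
  (Matrix.of fun p q : Fin d × Fin d =>
      (C (Matrix.single p.1 q.1 1)) p.2 q.2).PosSemidef

theorem variance_formula_hidden_quantum_markov
    {d : ℕ} {Ω : Type*} [Fintype Ω] [DecidableEq Ω]
    (C : Ω → (Matrix (Fin d) (Fin d) ℂ →ₗ[ℂ] Matrix (Fin d) (Fin d) ℂ))
    (hCP : ∀ ω, IsCompletelyPositive (C ω))
    (hTP : ∀ H : Matrix (Fin d) (Fin d) ℂ, ((∑ ω, C ω) H).trace = H.trace)
    (ρ : Matrix (Fin d) (Fin d) ℂ) (hρ : ρ.PosSemidef) (hρtr : ρ.trace = 1)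
    (hfix : (∑ ω, C ω) ρ = ρ)
    (X : Ω → ℝ)
    (CX : Matrix (Fin d) (Fin d) ℂ →ₗ[ℂ] Matrix (Fin d) (Fin d) ℂ)
    (hCX : CX = ∑ ω, (X ω : ℂ) • C ω)
    (Λt : Matrix (Fin d) (Fin d) ℂ →ₗ[ℂ] Matrix (Fin d) (Fin d) ℂ)
    (hΛt : ∀ H, Λt H = H.trace • ρ)
    (n : ℕ) :
    letI prob : (Fin n → Ω) → ℝ :=
      fun x => (((List.ofFn x).foldl (fun σ ω => C ω σ) ρ).trace).re
    letI S : (Fin n → Ω) → ℝ := fun x => ∑ i, X (x i)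
    letI Var : ℝ := ∑ ω, X ω ^ 2 * ((C ω ρ).trace).re
      - (∑ ω, X ω * ((C ω ρ).trace).re) ^ 2
    (∑ x : Fin n → Ω, (S x) ^ 2 * prob x)
        - (∑ x : Fin n → Ω, S x * prob x) ^ 2
      = (n : ℝ) * Var
        + 2 * ∑ k ∈ Finset.range (n - 1), ((n : ℝ) - (k : ℝ) - 1) *
            ((CX (((∑ ω, C ω) ^ k - Λt) (CX ρ))).trace).re := by
  beta_reduce
  have hfold : ∀ x : Fin n → Ω, (List.ofFn x).foldl (fun σ ω => C ω σ) ρ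
      = hqmFL C (List.ofFn x) ρ := fun x => (hqmFL_apply C _ ρ).symm
  simp only [hfold]
  set m : ℂ := (CX ρ).trace with hm
  set aR : ℝ := ∑ ω, X ω ^ 2 * ((C ω ρ).trace).re with haR
  set rr : ℕ → ℝ := fun k => ((CX (((∑ ω, C ω) ^ k) (CX ρ))).trace).re with hrr
  have hYX : (∑ ω, ((X ω : ℂ)) • C ω) = CX := hCX.symm
  -- reality of single-step traces
  have htr_real : ∀ ω, ((C ω ρ).trace).im = 0 := fun ω => by
    have h := hCP ω
    unfold IsCompletelyPositive at h
    exact hqm_trace_real h.1 hρ.1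
  have hmeq : m = ∑ ω, (X ω : ℂ) * (C ω ρ).trace := by
    rw [hm, hCX, LinearMap.sum_apply, Matrix.trace_sum]
    exact Finset.sum_congr rfl fun ω _ => by
      rw [LinearMap.smul_apply, Matrix.trace_smul, smul_eq_mul]
  have him : m.im = 0 := by
    rw [hmeq, Complex.im_sum]
    refine Finset.sum_eq_zero fun ω _ => ?_
    rw [Complex.im_ofReal_mul, htr_real, mul_zero]
  have hmre : ∑ ω, X ω * ((C ω ρ).trace).re = m.re := by
    rw [hmeq, Complex.re_sum]
    exact Finset.sum_congr rfl fun ω _ => (Complex.re_ofReal_mul _ _).symm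
  -- the per-pair correlation values
  have hpair : ∀ i j : Fin n,
      (∑ x : Fin n → Ω, X (x i) * X (x j) * ((hqmFL C (List.ofFn x) ρ).trace).re)
        = if (i : ℕ) = (j : ℕ) then aR
          else rr (max (i : ℕ) (j : ℕ) - min (i : ℕ) (j : ℕ) - 1) := by
    intro i j
    have hre : ∀ x : Fin n → Ω, X (x i) * X (x j) * ((hqmFL C (List.ofFn x) ρ).trace).re
        = (((X (x i) : ℂ)) * (X (x j) : ℂ) * (hqmFL C (List.ofFn x) ρ).trace).re := by
      intro x
      rw [mul_assoc, mul_assoc, Complex.re_ofReal_mul, Complex.re_ofReal_mul]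
    rw [Finset.sum_congr rfl fun x _ => hre x, ← Complex.re_sum]
    rcases lt_trichotomy i j with h | h | h
    · have hP := hqm_P2t C hTP hfix (fun ω => (X ω : ℂ)) (fun ω => (X ω : ℂ)) n i j h
      rw [hP, hYX]
      have hij : (i : ℕ) < (j : ℕ) := h
      rw [if_neg (Nat.ne_of_lt hij), Nat.max_eq_right hij.le, Nat.min_eq_left hij.le, hrr]
    · subst h
      have hP := hqm_P1t C hTP hfix (fun ω => (X ω : ℂ) * (X ω : ℂ)) n i
      have heq : ∀ x : Fin n → Ω,
          (X (x i) : ℂ) * (X (x i) : ℂ) * (hqmFL C (List.ofFn x) ρ).trace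
          = (fun ω => (X ω : ℂ) * (X ω : ℂ)) (x i) * (hqmFL C (List.ofFn x) ρ).trace :=
        fun x => rfl
      rw [Finset.sum_congr rfl fun x _ => heq x, hP, if_pos rfl, haR]
      rw [LinearMap.sum_apply, Matrix.trace_sum, Complex.re_sum]
      refine Finset.sum_congr rfl fun ω _ => ?_
      rw [LinearMap.smul_apply, Matrix.trace_smul, smul_eq_mul]
      have : (X ω : ℂ) * (X ω : ℂ) = ((X ω ^ 2 : ℝ) : ℂ) := by push_cast; ring
      rw [this, Complex.re_ofReal_mul]
    · have hP := hqm_P2t C hTP hfix (fun ω => (X ω : ℂ)) (fun ω => (X ω : ℂ)) n j i h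
      have hcomm : ∀ x : Fin n → Ω,
          (X (x i) : ℂ) * (X (x j) : ℂ) * (hqmFL C (List.ofFn x) ρ).trace
          = (X (x j) : ℂ) * (X (x i) : ℂ) * (hqmFL C (List.ofFn x) ρ).trace := by
        intro x; ring
      rw [Finset.sum_congr rfl fun x _ => hcomm x, hP, hYX]
      have hij : (j : ℕ) < (i : ℕ) := h
      rw [if_neg (Nat.ne_of_lt hij).symm, Nat.max_eq_left hij.le, Nat.min_eq_right hij.le, hrr]
  -- second moment
  have hE2 : ∑ x : Fin n → Ω, (∑ i, X (x i)) ^ 2 * ((hqmFL C (List.ofFn x) ρ).trace).re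
      = ∑ i : Fin n, ∑ j : Fin n, ∑ x : Fin n → Ω,
          X (x i) * X (x j) * ((hqmFL C (List.ofFn x) ρ).trace).re := by
    have hsq : ∀ x : Fin n → Ω, (∑ i, X (x i)) ^ 2 * ((hqmFL C (List.ofFn x) ρ).trace).re
        = ∑ i : Fin n, ∑ j : Fin n,
            X (x i) * X (x j) * ((hqmFL C (List.ofFn x) ρ).trace).re := by
      intro x
      rw [pow_two, Finset.sum_mul_sum, Finset.sum_mul]
      exact Finset.sum_congr rfl fun i _ => Finset.sum_mul _ _ _
    rw [Finset.sum_congr rfl fun x _ => hsq x, Finset.sum_comm]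
    exact Finset.sum_congr rfl fun i _ => Finset.sum_comm
  -- first moment
  have hE1 : ∑ x : Fin n → Ω, (∑ i, X (x i)) * ((hqmFL C (List.ofFn x) ρ).trace).re
      = (n : ℝ) * m.re := by
    have hlin : ∀ x : Fin n → Ω, (∑ i, X (x i)) * ((hqmFL C (List.ofFn x) ρ).trace).re
        = ∑ i : Fin n, X (x i) * ((hqmFL C (List.ofFn x) ρ).trace).re :=
      fun x => Finset.sum_mul _ _ _
    rw [Finset.sum_congr rfl fun x _ => hlin x, Finset.sum_comm]
    have hone : ∀ i : Fin n, ∑ x : Fin n → Ω, X (x i) * ((hqmFL C (List.ofFn x) ρ).trace).re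
        = m.re := by
      intro i
      have hre : ∀ x : Fin n → Ω, X (x i) * ((hqmFL C (List.ofFn x) ρ).trace).re
          = ((X (x i) : ℂ) * (hqmFL C (List.ofFn x) ρ).trace).re :=
        fun x => (Complex.re_ofReal_mul _ _).symm
      rw [Finset.sum_congr rfl fun x _ => hre x, ← Complex.re_sum]
      rw [hqm_P1t C hTP hfix (fun ω => (X ω : ℂ)) n i, hYX]
    rw [Finset.sum_congr rfl fun i _ => hone i, Finset.sum_const, Finset.card_univ,
      Fintype.card_fin, nsmul_eq_mul]
  -- convert double Fin sum to range sums and apply the counting identity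
  have hVconv : ∑ i : Fin n, ∑ j : Fin n,
        (if (i : ℕ) = (j : ℕ) then aR else rr (max (i : ℕ) (j : ℕ) - min (i : ℕ) (j : ℕ) - 1))
      = (n : ℝ) * aR + 2 * ∑ k ∈ Finset.range (n - 1), ((n : ℝ) - k - 1) * rr k := by
    rw [Fin.sum_univ_eq_sum_range
      (fun a => ∑ j : Fin n, if a = (j : ℕ) then aR else rr (max a (j : ℕ) - min a (j : ℕ) - 1))]
    rw [Finset.sum_congr rfl fun i _ =>
      Fin.sum_univ_eq_sum_range (fun b => if i = b then aR else rr (max i b - min i b - 1)) n]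
    exact hqm_comb aR rr n
  -- the gauss counting identity
  have hgauss : (n : ℝ) * (n : ℝ) = (n : ℝ) + 2 * ∑ k ∈ Finset.range (n - 1), ((n : ℝ) - k - 1) := by
    have h := hqm_comb 1 (fun _ => 1) n
    simp only [ite_self, mul_one, Finset.sum_const, Finset.card_range, nsmul_eq_mul] at h
    exact h
  -- the summand on the right-hand side
  have hRHSk : ∀ k : ℕ, ((CX (((∑ ω, C ω) ^ k - Λt) (CX ρ))).trace).re = rr k - m.re ^ 2 := by
    intro k
    rw [LinearMap.sub_apply, map_sub, Matrix.trace_sub, hΛt, map_smul, Matrix.trace_smul,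
      smul_eq_mul, ← hm, Complex.sub_re, Complex.mul_re, him]
    rw [hrr]
    ring
  -- assemble
  rw [hE2, Finset.sum_congr rfl fun i _ => Finset.sum_congr rfl fun j _ => hpair i j, hVconv,
    hE1, hmre]
  simp only [hRHSk]
  have hsplit : ∑ k ∈ Finset.range (n - 1), ((n : ℝ) - k - 1) * (rr k - m.re ^ 2)
      = (∑ k ∈ Finset.range (n - 1), ((n : ℝ) - k - 1) * rr k)
        - m.re ^ 2 * ∑ k ∈ Finset.range (n - 1), ((n : ℝ) - k - 1) := by
    rw [Finset.mul_sum, ← Finset.sum_sub_distrib]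
    exact Finset.sum_congr rfl fun k _ => by ring
  rw [hsplit]
  linear_combination (-(m.re ^ 2)) * hgauss
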